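/- With λ_ε = ε + λ (ε > 0, Re λ ≥ 0), ζ = √μ ξ, ω = √(ρλ_ε + μ|ξ|²), the pressure-trace symbol for the case α = +1, β = +1 simplifies as: ρλ_ε (ω² + |ζ|²) / ((ω² + |ζ|²)² − 4ω|ζ|³) = (ω² + |ζ|²) / ((ω² − |ζ|²) + 4|ζ|² ω/(ω + |ζ|)). -/

import Mathlib

/-- The pressure-trace symbol identity for the case α = +1, β = +1:
with `λ_ε = ε + λ`, `ζ = √μ ξ` and `ω = √(ρλ_ε + μ|ξ|²)` (so `ω² − |ζ|² = ρλ_ε`),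
the denominators are nonzero and
`ρλ_ε (ω² + |ζ|²)/((ω² + |ζ|²)² − 4ω|ζ|³)
  = (ω² + |ζ|²)/((ω² − |ζ|²) + 4|ζ|² ω/(ω + |ζ|))`. -/
theorem pressure_trace_symbol_identity {m : ℕ}
    (ρ μ ε : ℝ) (hρ : 0 < ρ) (hμ : 0 < μ) (hε : 0 < ε)
    (lam : ℂ) (hlam : 0 ≤ lam.re) (ξ : EuclideanSpace ℝ (Fin m))
    (lamε : ℂ) (hlamε : lamε = ε + lam)
    (ζ : EuclideanSpace ℝ (Fin m)) (hζ : ζ = Real.sqrt μ • ξ)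
    (ω : ℂ) (hω2 : ω ^ 2 = ρ * lamε + μ * ‖ξ‖ ^ 2) (hωre : 0 < ω.re) :
    ((ω ^ 2 + (‖ζ‖ : ℂ) ^ 2) ^ 2 - 4 * ω * (‖ζ‖ : ℂ) ^ 3 ≠ 0)
    ∧ ((ω ^ 2 - (‖ζ‖ : ℂ) ^ 2) + 4 * (‖ζ‖ : ℂ) ^ 2 * ω / (ω + (‖ζ‖ : ℂ)) ≠ 0)
    ∧ (ρ * lamε * (ω ^ 2 + (‖ζ‖ : ℂ) ^ 2)
          / ((ω ^ 2 + (‖ζ‖ : ℂ) ^ 2) ^ 2 - 4 * ω * (‖ζ‖ : ℂ) ^ 3)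
        = (ω ^ 2 + (‖ζ‖ : ℂ) ^ 2)
          / ((ω ^ 2 - (‖ζ‖ : ℂ) ^ 2) + 4 * (‖ζ‖ : ℂ) ^ 2 * ω / (ω + (‖ζ‖ : ℂ)))) := by
  set r : ℝ := ‖ζ‖ with hr
  have hr0 : 0 ≤ r := norm_nonneg _
  -- r² = μ‖ξ‖²
  have hr2 : r ^ 2 = μ * ‖ξ‖ ^ 2 := by
    rw [hr, hζ, norm_smul, Real.norm_eq_abs, abs_of_nonneg (Real.sqrt_nonneg μ)]
    rw [mul_pow, Real.sq_sqrt hμ.le]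
  have hrc2 : ((r : ℂ)) ^ 2 = (μ : ℂ) * (‖ξ‖ : ℂ) ^ 2 := by
    exact_mod_cast congrArg (Complex.ofReal) hr2
  have hωζ : ω ^ 2 - (r : ℂ) ^ 2 = ρ * lamε := by
    rw [hω2, hrc2]; ring
  -- Re(ρ lamε) > 0
  have hre : 0 < ((ρ : ℂ) * lamε).re := by
    rw [hlamε]
    simp [Complex.mul_re, Complex.add_re, Complex.add_im]
    nlinarith
  have hne0 : (ρ : ℂ) * lamε ≠ 0 := fun h => by simp [h] at hre
  -- ω + r ≠ 0
  have hωs : ω + (r : ℂ) ≠ 0 := by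
    intro h
    have : (ω + (r : ℂ)).re = 0 := by rw [h]; simp
    simp [Complex.add_re] at this
    nlinarith
  -- the second denominator has positive real part
  have hfrac : 0 ≤ (4 * (r : ℂ) ^ 2 * ω / (ω + (r : ℂ))).re := by
    rw [Complex.div_re]
    have hsq : 0 ≤ Complex.normSq (ω + (r : ℂ)) := Complex.normSq_nonneg _
    have h1 : (4 * (r : ℂ) ^ 2 * ω).re = 4 * r ^ 2 * ω.re := by
      simp [Complex.mul_re, Complex.mul_im, pow_two]
    have h2 : (4 * (r : ℂ) ^ 2 * ω).im = 4 * r ^ 2 * ω.im := by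
      simp [Complex.mul_re, Complex.mul_im, pow_two]
    have h3 : (ω + (r : ℂ)).re = ω.re + r := by simp
    have h4 : (ω + (r : ℂ)).im = ω.im := by simp
    rw [h1, h2, h3, h4]
    have hnum : 0 ≤ 4 * r ^ 2 * ω.re * (ω.re + r) + 4 * r ^ 2 * ω.im * ω.im := by
      have h5 : 0 ≤ ω.re + r := by linarith
      have h6 : 0 ≤ 4 * r ^ 2 * ω.re := by positivity
      nlinarith [mul_nonneg h6 h5, mul_nonneg (by positivity : (0:ℝ) ≤ 4 * r ^ 2) (sq_nonneg ω.im), sq_nonneg ω.im, sq_nonneg r]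
    rw [← add_div]
    exact div_nonneg hnum hsq
  have hD' : (ρ : ℂ) * lamε + 4 * (r : ℂ) ^ 2 * ω / (ω + (r : ℂ)) ≠ 0 := by
    intro h
    have hh : ((ρ : ℂ) * lamε + 4 * (r : ℂ) ^ 2 * ω / (ω + (r : ℂ))).re = 0 := by
      rw [h]; simp
    rw [Complex.add_re] at hh
    nlinarith
  have hD : (ω ^ 2 - (r : ℂ) ^ 2) + 4 * (r : ℂ) ^ 2 * ω / (ω + (r : ℂ)) ≠ 0 := by
    rw [hωζ]; exact hD'
  -- factorization of the first denominator
  have hkey : (ω ^ 2 + (r : ℂ) ^ 2) ^ 2 - 4 * ω * (r : ℂ) ^ 3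
      = (ω ^ 2 - (r : ℂ) ^ 2) * ((ω ^ 2 - (r : ℂ) ^ 2) + 4 * (r : ℂ) ^ 2 * ω / (ω + (r : ℂ))) := by
    field_simp
    ring
  have hden : (ω ^ 2 + (r : ℂ) ^ 2) ^ 2 - 4 * ω * (r : ℂ) ^ 3 ≠ 0 := by
    rw [hkey, hωζ]
    exact mul_ne_zero hne0 hD'
  refine ⟨hden, hD, ?_⟩
  rw [hkey, hωζ, mul_div_mul_left _ _ hne0]
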